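/- Let 𝔄 and 𝔅 be weakly Connes amenable dual Banach algebras such that the linear span of {a₁a₂ : a₁, a₂ ∈ 𝔄} is w*-dense in 𝔄 and the linear span of {b₁b₂ : b₁, b₂ ∈ 𝔅} is w*-dense in 𝔅. Then the ℓ¹-direct sum 𝔄 ⊕¹ 𝔅 is weakly Connes amenable. -/

import Mathlib

noncomputable section

open Filter Topology

universe u

/-- The locally convex topology on `A` induced by a pairing `p : A → X → ℂ`,
i.e. the initial topology for the family of maps `a ↦ p a x`, `x : X`. -/
def topOfPairing {A X : Type*} (p : A → X → ℂ) : TopologicalSpace A :=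
  TopologicalSpace.induced p Pi.topologicalSpace

theorem continuous_topOfPairing_iff {B A X : Type*} {tB : TopologicalSpace B}
    {p : A → X → ℂ} {f : B → A} :
    Continuous[tB, topOfPairing p] f ↔
      ∀ x, Continuous[tB, inferInstance] fun b => p (f b) x := by
  rw [topOfPairing, continuous_induced_rng, continuous_pi_iff]
  exact Iff.rfl

theorem topOfPairing_eval_cont {A X : Type*} (p : A → X → ℂ) (x : X) :
    Continuous[topOfPairing p, inferInstance] fun a => p a x :=
  continuous_topOfPairing_iff.1 (@continuous_id _ (topOfPairing p)) x

/-- The weak topology `σ(E, E*)` on a normed space `E`. -/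
def weakTop (E : Type u) [NormedAddCommGroup E] [NormedSpace ℂ E] : TopologicalSpace E :=
  topOfPairing fun x (φ : E →L[ℂ] ℂ) => φ x

/-- The weak-* topology `σ(E*, E)` on the dual of a normed space `E`. -/
def wstarD (E : Type u) [NormedAddCommGroup E] [NormedSpace ℂ E] :
    TopologicalSpace (E →L[ℂ] ℂ) :=
  topOfPairing fun Λ (x : E) => Λ x

section Core

variable {A X : Type u} [NormedAddCommGroup A] [NormedSpace ℂ A]
  [NormedAddCommGroup X] [NormedSpace ℂ X]

/-- The weak-* topology `σ(A, X)` on a dual Banach space `A`, where the duality with the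
predual `X` is implemented by an isometric linear isomorphism `ρ : A ≅ X*`. -/
def wstar (ρ : A ≃ₗᵢ[ℂ] (X →L[ℂ] ℂ)) : TopologicalSpace A :=
  topOfPairing fun a (x : X) => ρ a x

theorem weakTop_cont_iff {B : Type*} {tB : TopologicalSpace B} {E : Type u}
    [NormedAddCommGroup E] [NormedSpace ℂ E] {f : B → E} :
    Continuous[tB, weakTop E] f ↔
      ∀ φ : E →L[ℂ] ℂ, Continuous[tB, inferInstance] fun b => φ (f b) :=
  continuous_topOfPairing_iff

namespace WeakCont

variable {B : Type*} {E F : Type u} [NormedAddCommGroup E] [NormedSpace ℂ E]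
  [NormedAddCommGroup F] [NormedSpace ℂ F]

theorem clm_comp (tB : TopologicalSpace B) (L : E →L[ℂ] F) {f : B → E}
    (hf : Continuous[tB, weakTop E] f) : Continuous[tB, weakTop F] fun b => L (f b) :=
  weakTop_cont_iff.2 fun φ => weakTop_cont_iff.1 hf (φ.comp L)

theorem add (tB : TopologicalSpace B) {f g : B → E} (hf : Continuous[tB, weakTop E] f)
    (hg : Continuous[tB, weakTop E] g) : Continuous[tB, weakTop E] fun b => f b + g b := by
  refine weakTop_cont_iff.2 fun φ => ?_
  letI := tB
  have h := (weakTop_cont_iff.1 hf φ).add (weakTop_cont_iff.1 hg φ)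
  convert h using 1; funext b; simp

theorem const_smul (tB : TopologicalSpace B) {f : B → E} (hf : Continuous[tB, weakTop E] f)
    (c : ℂ) : Continuous[tB, weakTop E] fun b => c • f b := by
  refine weakTop_cont_iff.2 fun φ => ?_
  letI := tB
  have h := (weakTop_cont_iff.1 hf φ).const_smul c
  convert h using 1; funext b; simp

theorem zero (tB : TopologicalSpace B) :
    Continuous[tB, weakTop E] fun _ : B => (0 : E) := by
  refine weakTop_cont_iff.2 fun φ => ?_
  letI := tB
  simpa using (continuous_const : Continuous fun _ : B => (0 : ℂ))

end WeakCont

/-- A Banach algebra structure on a normed space `A`: an associative continuous bilinear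
multiplication satisfying `‖a * b‖ ≤ ‖a‖ * ‖b‖`. -/
structure BanachAlgStr (A : Type u) [NormedAddCommGroup A] [NormedSpace ℂ A] where
  mul : A →L[ℂ] A →L[ℂ] A
  mul_assoc : ∀ a b c, mul (mul a b) c = mul a (mul b c)
  norm_mul_le : ∀ a b, ‖mul a b‖ ≤ ‖a‖ * ‖b‖

/-- `A`, with predual `X` (via `ρ`) and multiplication `S`, is a dual Banach algebra:
the multiplication is separately continuous for the weak-* topology `σ(A, X)`. -/
structure IsDualBanachAlgebra (ρ : A ≃ₗᵢ[ℂ] (X →L[ℂ] ℂ)) (S : BanachAlgStr A) : Prop where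
  mul_left : ∀ a, Continuous[wstar ρ, wstar ρ] fun b => S.mul a b
  mul_right : ∀ a, Continuous[wstar ρ, wstar ρ] fun b => S.mul b a

/-- A Banach `A`-bimodule structure (for the Banach algebra `(A, S)`) on a normed space `E`:
continuous bilinear left and right actions `l`, `r` which commute and are associative
for the multiplication `S.mul`. -/
structure BanachBimodule {A : Type u} [NormedAddCommGroup A] [NormedSpace ℂ A]
    (S : BanachAlgStr A) (E : Type u) [NormedAddCommGroup E] [NormedSpace ℂ E] where
  l : A →L[ℂ] E →L[ℂ] E
  r : A →L[ℂ] E →L[ℂ] E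
  l_mul : ∀ a b x, l (S.mul a b) x = l a (l b x)
  r_mul : ∀ a b x, r (S.mul a b) x = r b (r a x)
  lr_comm : ∀ a b x, l a (r b x) = r b (l a x)

/-- `A` as a Banach bimodule over itself, via multiplication. -/
def BanachAlgStr.toBimodule (S : BanachAlgStr A) : BanachBimodule S A where
  l := S.mul
  r := S.mul.flip
  l_mul := fun a b x => S.mul_assoc a b x
  r_mul := fun a b x => (S.mul_assoc x a b).symm
  lr_comm := fun a b x => (S.mul_assoc a x b).symm

variable {E : Type u} [NormedAddCommGroup E] [NormedSpace ℂ E]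

/-- `σwc(E)`: the set of `x ∈ E` such that the maps `a ↦ a · x` and `a ↦ x · a` are
continuous from the weak-* topology on `A` into the weak topology on `E`.
It is a (closed) linear subspace of `E`. -/
def sigmaWC (ρ : A ≃ₗᵢ[ℂ] (X →L[ℂ] ℂ)) {S : BanachAlgStr A} (M : BanachBimodule S E) :
    Submodule ℂ E where
  carrier := {x | Continuous[wstar ρ, weakTop E] (fun a => M.l a x) ∧
    Continuous[wstar ρ, weakTop E] fun a => M.r a x}
  add_mem' := by
    rintro x y ⟨h1, h2⟩ ⟨h3, h4⟩
    constructor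
    · simp only [map_add]
      exact WeakCont.add _ h1 h3
    · simp only [map_add]
      exact WeakCont.add _ h2 h4
  zero_mem' := by
    constructor
    · simp only [map_zero]
      exact WeakCont.zero _
    · simp only [map_zero]
      exact WeakCont.zero _
  smul_mem' := by
    rintro c x ⟨h1, h2⟩
    constructor
    · simp only [map_smul]
      exact WeakCont.const_smul _ h1 c
    · simp only [map_smul]
      exact WeakCont.const_smul _ h2 c

theorem smulL_mem_sigmaWC {ρ : A ≃ₗᵢ[ℂ] (X →L[ℂ] ℂ)} {S : BanachAlgStr A}
    {M : BanachBimodule S E} (hA : IsDualBanachAlgebra ρ S) {x : E}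
    (hx : x ∈ sigmaWC ρ M) (a : A) : M.l a x ∈ sigmaWC ρ M := by
  obtain ⟨h1, h2⟩ := hx
  constructor
  · have he : (fun c => M.l c (M.l a x)) = fun c => M.l (S.mul c a) x :=
      funext fun c => (M.l_mul c a x).symm
    rw [he]
    exact @Continuous.comp A A E (wstar ρ) (wstar ρ) (weakTop E) _ _ h1 (hA.mul_right a)
  · have he : (fun c => M.r c (M.l a x)) = fun c => M.l a (M.r c x) :=
      funext fun c => (M.lr_comm a c x).symm
    rw [he]
    exact WeakCont.clm_comp _ (M.l a) h2

theorem smulR_mem_sigmaWC {ρ : A ≃ₗᵢ[ℂ] (X →L[ℂ] ℂ)} {S : BanachAlgStr A}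
    {M : BanachBimodule S E} (hA : IsDualBanachAlgebra ρ S) {x : E}
    (hx : x ∈ sigmaWC ρ M) (a : A) : M.r a x ∈ sigmaWC ρ M := by
  obtain ⟨h1, h2⟩ := hx
  constructor
  · have he : (fun c => M.l c (M.r a x)) = fun c => M.r a (M.l c x) :=
      funext fun c => M.lr_comm c a x
    rw [he]
    exact WeakCont.clm_comp _ (M.r a) h1
  · have he : (fun c => M.r c (M.r a x)) = fun c => M.r (S.mul a c) x :=
      funext fun c => (M.r_mul a c x).symm
    rw [he]
    exact @Continuous.comp A A E (wstar ρ) (wstar ρ) (weakTop E) _ _ h2 (hA.mul_left a)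

/-- `j_E : E* → σwc(E)*`, restriction of functionals (the adjoint of the inclusion
`σwc(E) ↪ E`). -/
def jmap (ρ : A ≃ₗᵢ[ℂ] (X →L[ℂ] ℂ)) {S : BanachAlgStr A} (M : BanachBimodule S E)
    (φ : E →L[ℂ] ℂ) : ↥(sigmaWC ρ M) →L[ℂ] ℂ :=
  φ.comp (sigmaWC ρ M).subtypeL

/-- The left dual action of `A` on `σwc(E)*`: `(a · Λ)(x) = Λ(x · a)`. -/
def dualL {ρ : A ≃ₗᵢ[ℂ] (X →L[ℂ] ℂ)} {S : BanachAlgStr A} {M : BanachBimodule S E}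
    (hA : IsDualBanachAlgebra ρ S) (a : A) (Λ : ↥(sigmaWC ρ M) →L[ℂ] ℂ) :
    ↥(sigmaWC ρ M) →L[ℂ] ℂ :=
  Λ.comp (ContinuousLinearMap.codRestrict ((M.r a).comp (sigmaWC ρ M).subtypeL)
    (sigmaWC ρ M) fun x => smulR_mem_sigmaWC hA x.2 a)

/-- The right dual action of `A` on `σwc(E)*`: `(Λ · a)(x) = Λ(a · x)`. -/
def dualR {ρ : A ≃ₗᵢ[ℂ] (X →L[ℂ] ℂ)} {S : BanachAlgStr A} {M : BanachBimodule S E}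
    (hA : IsDualBanachAlgebra ρ S) (a : A) (Λ : ↥(sigmaWC ρ M) →L[ℂ] ℂ) :
    ↥(sigmaWC ρ M) →L[ℂ] ℂ :=
  Λ.comp (ContinuousLinearMap.codRestrict ((M.l a).comp (sigmaWC ρ M).subtypeL)
    (sigmaWC ρ M) fun x => smulL_mem_sigmaWC hA x.2 a)

/-- `D : A → E*` is a derivation for the dual bimodule actions of `A` on `E*`,
i.e. `D(ab) = a · D(b) + D(a) · b`, where `(a · φ)(x) = φ(x · a)` and
`(φ · a)(x) = φ(a · x)`. -/
def IsDerivationToDual (S : BanachAlgStr A) (M : BanachBimodule S E)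
    (D : A →L[ℂ] (E →L[ℂ] ℂ)) : Prop :=
  ∀ a b, D (S.mul a b) = (D b).comp (M.r a) + (D a).comp (M.l b)

/-- `D : A → E` is a derivation for the bimodule actions of `A` on `E`:
`D(ab) = a · D(b) + D(a) · b`. -/
def IsDerivationInto (S : BanachAlgStr A) (M : BanachBimodule S E)
    (D : A →L[ℂ] E) : Prop :=
  ∀ a b, D (S.mul a b) = M.l a (D b) + M.r b (D a)

/-- The dual Banach algebra `(A, ρ, S)` is weakly Connes amenable: for every derivation
`D : A → A*` such that `j_A ∘ D : A → σwc(A)*` is weak-*–weak-* continuous, the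
derivation `j_A ∘ D` is inner, i.e. of the form `a ↦ a · Φ - Φ · a` for some
`Φ ∈ σwc(A)*`. -/
def WeaklyConnesAmenable (ρ : A ≃ₗᵢ[ℂ] (X →L[ℂ] ℂ)) (S : BanachAlgStr A)
    (hA : IsDualBanachAlgebra ρ S) : Prop :=
  ∀ D : A →L[ℂ] (A →L[ℂ] ℂ), IsDerivationToDual S S.toBimodule D →
    Continuous[wstar ρ, wstarD ↥(sigmaWC ρ S.toBimodule)]
      (fun a => jmap ρ S.toBimodule (D a)) →
    ∃ Φ, ∀ a, jmap ρ S.toBimodule (D a) = dualL hA a Φ - dualR hA a Φ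

end Core

section Prod1

variable {A X B Y : Type u} [NormedAddCommGroup A] [NormedSpace ℂ A]
  [NormedAddCommGroup X] [NormedSpace ℂ X] [NormedAddCommGroup B] [NormedSpace ℂ B]
  [NormedAddCommGroup Y] [NormedSpace ℂ Y]

/-- The canonical (linear homeomorphic) identification of the ℓ¹-direct sum `A ⊕¹ B`
(realized as `WithLp 1 (A × B)`, with norm `‖(a,b)‖ = ‖a‖ + ‖b‖`) with the product. -/
def prodL1 (A B : Type u) [NormedAddCommGroup A] [NormedSpace ℂ A]
    [NormedAddCommGroup B] [NormedSpace ℂ B] : WithLp 1 (A × B) ≃L[ℂ] A × B :=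
  WithLp.prodContinuousLinearEquiv 1 ℂ A B

/-- The natural injective homomorphism `ι_A : A → A ⊕¹ B`, `a ↦ (a, 0)`. -/
def iotaA (A B : Type u) [NormedAddCommGroup A] [NormedSpace ℂ A]
    [NormedAddCommGroup B] [NormedSpace ℂ B] : A →L[ℂ] WithLp 1 (A × B) :=
  ((prodL1 A B).symm : A × B →L[ℂ] WithLp 1 (A × B)).comp (ContinuousLinearMap.inl ℂ A B)

/-- The natural injective homomorphism `ι_B : B → A ⊕¹ B`, `b ↦ (0, b)`. -/
def iotaB (A B : Type u) [NormedAddCommGroup A] [NormedSpace ℂ A]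
    [NormedAddCommGroup B] [NormedSpace ℂ B] : B →L[ℂ] WithLp 1 (A × B) :=
  ((prodL1 A B).symm : A × B →L[ℂ] WithLp 1 (A × B)).comp (ContinuousLinearMap.inr ℂ A B)

variable (ρA : A ≃ₗᵢ[ℂ] (X →L[ℂ] ℂ)) (ρB : B ≃ₗᵢ[ℂ] (Y →L[ℂ] ℂ))
  (SA : BanachAlgStr A) (SB : BanachAlgStr B)
  (ρP : WithLp 1 (A × B) ≃ₗᵢ[ℂ] ((X × Y) →L[ℂ] ℂ))
  (SP : BanachAlgStr (WithLp 1 (A × B)))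

theorem prodL1_iotaA (z : A) : prodL1 A B (iotaA A B z) = (z, 0) := by
  simp [iotaA]

theorem prodL1_iotaB (z : B) : prodL1 A B (iotaB A B z) = (0, z) := by
  simp [iotaB]

theorem fst_wstar_cont
    (hρP : ∀ u q, ρP u q = ρA (prodL1 A B u).1 q.1 + ρB (prodL1 A B u).2 q.2) :
    Continuous[wstar ρP, wstar ρA] fun u => (prodL1 A B u).1 := by
  refine continuous_topOfPairing_iff.2 fun x => ?_
  have he : (fun u => ρA (prodL1 A B u).1 x) = fun u => ρP u (x, 0) := by
    funext u; rw [hρP]; simp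
  rw [he]
  exact topOfPairing_eval_cont _ _

theorem snd_wstar_cont
    (hρP : ∀ u q, ρP u q = ρA (prodL1 A B u).1 q.1 + ρB (prodL1 A B u).2 q.2) :
    Continuous[wstar ρP, wstar ρB] fun u => (prodL1 A B u).2 := by
  refine continuous_topOfPairing_iff.2 fun y => ?_
  have he : (fun u => ρB (prodL1 A B u).2 y) = fun u => ρP u (0, y) := by
    funext u; rw [hρP]; simp
  rw [he]
  exact topOfPairing_eval_cont _ _

theorem iotaA_mem_sigmaWC
    (hρP : ∀ u q, ρP u q = ρA (prodL1 A B u).1 q.1 + ρB (prodL1 A B u).2 q.2)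
    (hSP : ∀ u v, prodL1 A B (SP.mul u v) =
      (SA.mul (prodL1 A B u).1 (prodL1 A B v).1, SB.mul (prodL1 A B u).2 (prodL1 A B v).2))
    {x : A} (hx : x ∈ sigmaWC ρA SA.toBimodule) :
    iotaA A B x ∈ sigmaWC ρP SP.toBimodule := by
  obtain ⟨h1, h2⟩ := hx
  have hfst := fst_wstar_cont ρA ρB ρP hρP
  constructor
  · have he : (fun c => SP.toBimodule.l c (iotaA A B x)) =
        fun c => iotaA A B (SA.mul (prodL1 A B c).1 x) := by
      funext c
      apply (prodL1 A B).injective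
      show prodL1 A B (SP.mul c (iotaA A B x)) = _
      rw [hSP, prodL1_iotaA, prodL1_iotaA]
      simp
    rw [he]
    exact WeakCont.clm_comp _ (iotaA A B)
      (@Continuous.comp _ _ _ (wstar ρP) (wstar ρA) (weakTop A) _ _ h1 hfst)
  · have he : (fun c => SP.toBimodule.r c (iotaA A B x)) =
        fun c => iotaA A B (SA.mul x (prodL1 A B c).1) := by
      funext c
      apply (prodL1 A B).injective
      show prodL1 A B (SP.mul (iotaA A B x) c) = _
      rw [hSP, prodL1_iotaA, prodL1_iotaA]
      simp
    rw [he]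
    exact WeakCont.clm_comp _ (iotaA A B)
      (@Continuous.comp _ _ _ (wstar ρP) (wstar ρA) (weakTop A) _ _ h2 hfst)

theorem iotaB_mem_sigmaWC
    (hρP : ∀ u q, ρP u q = ρA (prodL1 A B u).1 q.1 + ρB (prodL1 A B u).2 q.2)
    (hSP : ∀ u v, prodL1 A B (SP.mul u v) =
      (SA.mul (prodL1 A B u).1 (prodL1 A B v).1, SB.mul (prodL1 A B u).2 (prodL1 A B v).2))
    {y : B} (hy : y ∈ sigmaWC ρB SB.toBimodule) :
    iotaB A B y ∈ sigmaWC ρP SP.toBimodule := by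
  obtain ⟨h1, h2⟩ := hy
  have hsnd := snd_wstar_cont ρA ρB ρP hρP
  constructor
  · have he : (fun c => SP.toBimodule.l c (iotaB A B y)) =
        fun c => iotaB A B (SB.mul (prodL1 A B c).2 y) := by
      funext c
      apply (prodL1 A B).injective
      show prodL1 A B (SP.mul c (iotaB A B y)) = _
      rw [hSP, prodL1_iotaB, prodL1_iotaB]
      simp
    rw [he]
    exact WeakCont.clm_comp _ (iotaB A B)
      (@Continuous.comp _ _ _ (wstar ρP) (wstar ρB) (weakTop B) _ _ h1 hsnd)
  · have he : (fun c => SP.toBimodule.r c (iotaB A B y)) =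
        fun c => iotaB A B (SB.mul y (prodL1 A B c).2) := by
      funext c
      apply (prodL1 A B).injective
      show prodL1 A B (SP.mul (iotaB A B y) c) = _
      rw [hSP, prodL1_iotaB, prodL1_iotaB]
      simp
    rw [he]
    exact WeakCont.clm_comp _ (iotaB A B)
      (@Continuous.comp _ _ _ (wstar ρP) (wstar ρB) (weakTop B) _ _ h2 hsnd)

/-- `ν_A : σwc(A ⊕¹ B)* → σwc(A)*`, the adjoint of the natural embedding
`σwc(A) → σwc(A ⊕¹ B)`, `a ↦ (a, 0)`. -/
def nuA
    (hρP : ∀ u q, ρP u q = ρA (prodL1 A B u).1 q.1 + ρB (prodL1 A B u).2 q.2)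
    (hSP : ∀ u v, prodL1 A B (SP.mul u v) =
      (SA.mul (prodL1 A B u).1 (prodL1 A B v).1, SB.mul (prodL1 A B u).2 (prodL1 A B v).2))
    (Λ : ↥(sigmaWC ρP SP.toBimodule) →L[ℂ] ℂ) : ↥(sigmaWC ρA SA.toBimodule) →L[ℂ] ℂ :=
  Λ.comp (ContinuousLinearMap.codRestrict
    ((iotaA A B).comp (sigmaWC ρA SA.toBimodule).subtypeL) _
    fun z => iotaA_mem_sigmaWC ρA ρB SA SB ρP SP hρP hSP z.2)

/-- `ν_B : σwc(A ⊕¹ B)* → σwc(B)*`, the adjoint of the natural embedding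
`σwc(B) → σwc(A ⊕¹ B)`, `b ↦ (0, b)`. -/
def nuB
    (hρP : ∀ u q, ρP u q = ρA (prodL1 A B u).1 q.1 + ρB (prodL1 A B u).2 q.2)
    (hSP : ∀ u v, prodL1 A B (SP.mul u v) =
      (SA.mul (prodL1 A B u).1 (prodL1 A B v).1, SB.mul (prodL1 A B u).2 (prodL1 A B v).2))
    (Λ : ↥(sigmaWC ρP SP.toBimodule) →L[ℂ] ℂ) : ↥(sigmaWC ρB SB.toBimodule) →L[ℂ] ℂ :=
  Λ.comp (ContinuousLinearMap.codRestrict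
    ((iotaB A B).comp (sigmaWC ρB SB.toBimodule).subtypeL) _
    fun z => iotaB_mem_sigmaWC ρA ρB SA SB ρP SP hρP hSP z.2)

end Prod1

set_option maxHeartbeats 2000000

/-- **Theorem 3.10.** Let `𝔄` and `𝔅` be weakly Connes amenable dual Banach algebras such
that the linear spans of `𝔄² = (a₁a₂ : a₁, a₂ ∈ 𝔄)` and of `𝔅²` are w*-dense in `𝔄` and
`𝔅` respectively.  Then the ℓ¹-direct sum `𝔄 ⊕¹ 𝔅` is weakly Connes amenable.
The ℓ¹-direct sum is realized as `WithLp 1 (A × B)`, with predual `X × Y` (sup norm) and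
duality `ρP` and coordinatewise multiplication `SP` characterized by `hρP`, `hSP`. -/
theorem directSum_weaklyConnesAmenable {A X B Y : Type u}
    [NormedAddCommGroup A] [NormedSpace ℂ A] [CompleteSpace A]
    [NormedAddCommGroup X] [NormedSpace ℂ X] [CompleteSpace X]
    [NormedAddCommGroup B] [NormedSpace ℂ B] [CompleteSpace B]
    [NormedAddCommGroup Y] [NormedSpace ℂ Y] [CompleteSpace Y]
    (ρA : A ≃ₗᵢ[ℂ] (X →L[ℂ] ℂ)) (ρB : B ≃ₗᵢ[ℂ] (Y →L[ℂ] ℂ))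
    (SA : BanachAlgStr A) (SB : BanachAlgStr B)
    (hA : IsDualBanachAlgebra ρA SA) (hB : IsDualBanachAlgebra ρB SB)
    (ρP : WithLp 1 (A × B) ≃ₗᵢ[ℂ] ((X × Y) →L[ℂ] ℂ))
    (SP : BanachAlgStr (WithLp 1 (A × B)))
    (hρP : ∀ u q, ρP u q = ρA (prodL1 A B u).1 q.1 + ρB (prodL1 A B u).2 q.2)
    (hSP : ∀ u v, prodL1 A B (SP.mul u v) =
      (SA.mul (prodL1 A B u).1 (prodL1 A B v).1,
       SB.mul (prodL1 A B u).2 (prodL1 A B v).2))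
    (hP : IsDualBanachAlgebra ρP SP)
    (hWA : WeaklyConnesAmenable ρA SA hA) (hWB : WeaklyConnesAmenable ρB SB hB)
    (hdA : @Dense A (wstar ρA)
      (Submodule.span ℂ {x : A | ∃ a₁ a₂, x = SA.mul a₁ a₂} : Set A))
    (hdB : @Dense B (wstar ρB)
      (Submodule.span ℂ {y : B | ∃ b₁ b₂, y = SB.mul b₁ b₂} : Set B)) :
    WeaklyConnesAmenable ρP SP hP := by
  intro D hD hDcont
  -- abbreviations for bimodule actions (definitional)
  have hrP : ∀ u v : WithLp 1 (A × B), SP.toBimodule.r u v = SP.mul v u := fun _ _ => rfl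
  have hlP : ∀ u v : WithLp 1 (A × B), SP.toBimodule.l u v = SP.mul u v := fun _ _ => rfl
  -- multiplicativity of the embeddings
  have hmulAA : ∀ a a' : A,
      SP.mul (iotaA A B a) (iotaA A B a') = iotaA A B (SA.mul a a') := by
    intro a a'
    apply (prodL1 A B).injective
    rw [hSP, prodL1_iotaA, prodL1_iotaA, prodL1_iotaA]
    simp
  have hmulBB : ∀ b b' : B,
      SP.mul (iotaB A B b) (iotaB A B b') = iotaB A B (SB.mul b b') := by
    intro b b'
    apply (prodL1 A B).injective
    rw [hSP, prodL1_iotaB, prodL1_iotaB, prodL1_iotaB]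
    simp
  have hmulAB : ∀ (a : A) (b : B), SP.mul (iotaA A B a) (iotaB A B b) = 0 := by
    intro a b
    apply (prodL1 A B).injective
    rw [hSP, prodL1_iotaA, prodL1_iotaB]
    simp
  have hmulBA : ∀ (b : B) (a : A), SP.mul (iotaB A B b) (iotaA A B a) = 0 := by
    intro b a
    apply (prodL1 A B).injective
    rw [hSP, prodL1_iotaB, prodL1_iotaA]
    simp
  have hsum : ∀ u : WithLp 1 (A × B),
      iotaA A B (prodL1 A B u).1 + iotaB A B (prodL1 A B u).2 = u := by
    intro u
    apply (prodL1 A B).injective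
    rw [map_add, prodL1_iotaA, prodL1_iotaB]
    exact Prod.ext (by simp) (by simp)
  -- weak-* continuity of the embeddings
  have hiAcont : Continuous[wstar ρA, wstar ρP] fun a => iotaA A B a := by
    refine continuous_topOfPairing_iff.2 fun q => ?_
    have he : (fun a => ρP (iotaA A B a) q) = fun a => ρA a q.1 := by
      funext a
      rw [hρP, prodL1_iotaA]
      simp
    rw [he]
    exact topOfPairing_eval_cont _ _
  have hiBcont : Continuous[wstar ρB, wstar ρP] fun b => iotaB A B b := by
    refine continuous_topOfPairing_iff.2 fun q => ?_
    have he : (fun b => ρP (iotaB A B b) q) = fun b => ρB b q.2 := by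
      funext b
      rw [hρP, prodL1_iotaB]
      simp
    rw [he]
    exact topOfPairing_eval_cont _ _
  -- the coordinate projections as continuous linear maps
  let fstC : WithLp 1 (A × B) →L[ℂ] A :=
    (ContinuousLinearMap.fst ℂ A B).comp
      (prodL1 A B : WithLp 1 (A × B) →L[ℂ] A × B)
  let sndC : WithLp 1 (A × B) →L[ℂ] B :=
    (ContinuousLinearMap.snd ℂ A B).comp
      (prodL1 A B : WithLp 1 (A × B) →L[ℂ] A × B)
  have hfstC : ∀ u, fstC u = (prodL1 A B u).1 := fun _ => rfl
  have hsndC : ∀ u, sndC u = (prodL1 A B u).2 := fun _ => rfl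
  -- components of σwc elements are σwc
  have hmemA : ∀ z, z ∈ sigmaWC ρP SP.toBimodule →
      (prodL1 A B z).1 ∈ sigmaWC ρA SA.toBimodule := by
    intro z hz
    obtain ⟨h1, h2⟩ := hz
    constructor
    · have hc : Continuous[wstar ρA, weakTop (WithLp 1 (A × B))]
          fun a => SP.toBimodule.l (iotaA A B a) z :=
        @Continuous.comp _ _ _ (wstar ρA) (wstar ρP) (weakTop _) _ _ h1 hiAcont
      have hc2 := WeakCont.clm_comp (wstar ρA) fstC hc
      have he : (fun a => fstC (SP.toBimodule.l (iotaA A B a) z)) =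
          fun a => SA.mul a (prodL1 A B z).1 := by
        funext a
        rw [hfstC, hlP, hSP, prodL1_iotaA]
      rw [he] at hc2
      exact hc2
    · have hc : Continuous[wstar ρA, weakTop (WithLp 1 (A × B))]
          fun a => SP.toBimodule.r (iotaA A B a) z :=
        @Continuous.comp _ _ _ (wstar ρA) (wstar ρP) (weakTop _) _ _ h2 hiAcont
      have hc2 := WeakCont.clm_comp (wstar ρA) fstC hc
      have he : (fun a => fstC (SP.toBimodule.r (iotaA A B a) z)) =
          fun a => SA.mul (prodL1 A B z).1 a := by
        funext a
        rw [hfstC, hrP, hSP, prodL1_iotaA]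
      rw [he] at hc2
      exact hc2
  have hmemB : ∀ z, z ∈ sigmaWC ρP SP.toBimodule →
      (prodL1 A B z).2 ∈ sigmaWC ρB SB.toBimodule := by
    intro z hz
    obtain ⟨h1, h2⟩ := hz
    constructor
    · have hc : Continuous[wstar ρB, weakTop (WithLp 1 (A × B))]
          fun b => SP.toBimodule.l (iotaB A B b) z :=
        @Continuous.comp _ _ _ (wstar ρB) (wstar ρP) (weakTop _) _ _ h1 hiBcont
      have hc2 := WeakCont.clm_comp (wstar ρB) sndC hc
      have he : (fun b => sndC (SP.toBimodule.l (iotaB A B b) z)) =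
          fun b => SB.mul b (prodL1 A B z).2 := by
        funext b
        rw [hsndC, hlP, hSP, prodL1_iotaB]
      rw [he] at hc2
      exact hc2
    · have hc : Continuous[wstar ρB, weakTop (WithLp 1 (A × B))]
          fun b => SP.toBimodule.r (iotaB A B b) z :=
        @Continuous.comp _ _ _ (wstar ρB) (wstar ρP) (weakTop _) _ _ h2 hiBcont
      have hc2 := WeakCont.clm_comp (wstar ρB) sndC hc
      have he : (fun b => sndC (SP.toBimodule.r (iotaB A B b) z)) =
          fun b => SB.mul (prodL1 A B z).2 b := by
        funext b
        rw [hsndC, hrP, hSP, prodL1_iotaB]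
      rw [he] at hc2
      exact hc2
  -- the restricted derivations
  let DA : A →L[ℂ] (A →L[ℂ] ℂ) :=
    ((((ContinuousLinearMap.compL ℂ A (WithLp 1 (A × B)) ℂ).flip
        (iotaA A B)).comp D).comp (iotaA A B))
  let DB : B →L[ℂ] (B →L[ℂ] ℂ) :=
    ((((ContinuousLinearMap.compL ℂ B (WithLp 1 (A × B)) ℂ).flip
        (iotaB A B)).comp D).comp (iotaB A B))
  have hDAapp : ∀ a a', DA a a' = D (iotaA A B a) (iotaA A B a') := fun _ _ => rfl
  have hDBapp : ∀ b b', DB b b' = D (iotaB A B b) (iotaB A B b') := fun _ _ => rfl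
  have hDAder : IsDerivationToDual SA SA.toBimodule DA := by
    intro a b
    ext a'
    show D (iotaA A B (SA.mul a b)) (iotaA A B a') =
      D (iotaA A B b) (iotaA A B (SA.mul a' a)) +
      D (iotaA A B a) (iotaA A B (SA.mul b a'))
    rw [← hmulAA, hD]
    show D (iotaA A B b) (SP.mul (iotaA A B a') (iotaA A B a)) +
      D (iotaA A B a) (SP.mul (iotaA A B b) (iotaA A B a')) = _
    rw [hmulAA, hmulAA]
  have hDBder : IsDerivationToDual SB SB.toBimodule DB := by
    intro a b
    ext a'
    show D (iotaB A B (SB.mul a b)) (iotaB A B a') =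
      D (iotaB A B b) (iotaB A B (SB.mul a' a)) +
      D (iotaB A B a) (iotaB A B (SB.mul b a'))
    rw [← hmulBB, hD]
    show D (iotaB A B b) (SP.mul (iotaB A B a') (iotaB A B a)) +
      D (iotaB A B a) (SP.mul (iotaB A B b) (iotaB A B a')) = _
    rw [hmulBB, hmulBB]
  have hDAcont : Continuous[wstar ρA, wstarD ↥(sigmaWC ρA SA.toBimodule)]
      fun a => jmap ρA SA.toBimodule (DA a) := by
    refine continuous_topOfPairing_iff.2 fun x => ?_
    have hz : iotaA A B (x : A) ∈ sigmaWC ρP SP.toBimodule :=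
      iotaA_mem_sigmaWC ρA ρB SA SB ρP SP hρP hSP x.2
    have h1 := continuous_topOfPairing_iff.1 hDcont ⟨iotaA A B (x : A), hz⟩
    exact @Continuous.comp _ _ _ (wstar ρA) (wstar ρP) _ _ _ h1 hiAcont
  have hDBcont : Continuous[wstar ρB, wstarD ↥(sigmaWC ρB SB.toBimodule)]
      fun b => jmap ρB SB.toBimodule (DB b) := by
    refine continuous_topOfPairing_iff.2 fun y => ?_
    have hz : iotaB A B (y : B) ∈ sigmaWC ρP SP.toBimodule :=
      iotaB_mem_sigmaWC ρA ρB SA SB ρP SP hρP hSP y.2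
    have h1 := continuous_topOfPairing_iff.1 hDcont ⟨iotaB A B (y : B), hz⟩
    exact @Continuous.comp _ _ _ (wstar ρB) (wstar ρP) _ _ _ h1 hiBcont
  -- cross terms vanish
  have hcross1 : ∀ y : B, y ∈ sigmaWC ρB SB.toBimodule →
      ∀ a : A, D (iotaA A B a) (iotaB A B y) = 0 := by
    intro y hy
    have hz : iotaB A B y ∈ sigmaWC ρP SP.toBimodule :=
      iotaB_mem_sigmaWC ρA ρB SA SB ρP SP hρP hSP hy
    have hf : Continuous[wstar ρA, inferInstance]
        fun a => D (iotaA A B a) (iotaB A B y) := by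
      have h1 := continuous_topOfPairing_iff.1 hDcont ⟨iotaB A B y, hz⟩
      exact @Continuous.comp _ _ _ (wstar ρA) (wstar ρP) _ _ _ h1 hiAcont
    have h0 : ∀ p ∈ (Submodule.span ℂ {x : A | ∃ a₁ a₂, x = SA.mul a₁ a₂} : Set A),
        D (iotaA A B p) (iotaB A B y) = 0 := by
      intro p hp
      induction hp using Submodule.span_induction with
      | mem x h =>
        obtain ⟨a₁, a₂, rfl⟩ := h
        rw [← hmulAA, hD]
        show D (iotaA A B a₂) (SP.mul (iotaB A B y) (iotaA A B a₁)) +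
          D (iotaA A B a₁) (SP.mul (iotaA A B a₂) (iotaB A B y)) = 0
        rw [hmulBA, hmulAB]
        simp
      | zero => simp
      | add p q hp' hq' ihp ihq =>
        simp only [map_add, ContinuousLinearMap.add_apply, ihp, ihq, add_zero]
      | smul c p hp' ihp =>
        simp only [map_smul, ContinuousLinearMap.smul_apply, ihp, smul_zero]
    have hall : (fun a => D (iotaA A B a) (iotaB A B y)) = fun _ => (0 : ℂ) :=
      @Continuous.ext_on ℂ A _ (wstar ρA) _ _ hdA _ _ hf
        (@continuous_const A ℂ (wstar ρA) _ _) h0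
    intro a
    exact congrFun hall a
  have hcross2 : ∀ x : A, x ∈ sigmaWC ρA SA.toBimodule →
      ∀ b : B, D (iotaB A B b) (iotaA A B x) = 0 := by
    intro x hx
    have hz : iotaA A B x ∈ sigmaWC ρP SP.toBimodule :=
      iotaA_mem_sigmaWC ρA ρB SA SB ρP SP hρP hSP hx
    have hf : Continuous[wstar ρB, inferInstance]
        fun b => D (iotaB A B b) (iotaA A B x) := by
      have h1 := continuous_topOfPairing_iff.1 hDcont ⟨iotaA A B x, hz⟩
      exact @Continuous.comp _ _ _ (wstar ρB) (wstar ρP) _ _ _ h1 hiBcont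
    have h0 : ∀ p ∈ (Submodule.span ℂ {y : B | ∃ b₁ b₂, y = SB.mul b₁ b₂} : Set B),
        D (iotaB A B p) (iotaA A B x) = 0 := by
      intro p hp
      induction hp using Submodule.span_induction with
      | mem y h =>
        obtain ⟨b₁, b₂, rfl⟩ := h
        rw [← hmulBB, hD]
        show D (iotaB A B b₂) (SP.mul (iotaA A B x) (iotaB A B b₁)) +
          D (iotaB A B b₁) (SP.mul (iotaB A B b₂) (iotaA A B x)) = 0
        rw [hmulAB, hmulBA]
        simp
      | zero => simp
      | add p q hp' hq' ihp ihq =>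
        simp only [map_add, ContinuousLinearMap.add_apply, ihp, ihq, add_zero]
      | smul c p hp' ihp =>
        simp only [map_smul, ContinuousLinearMap.smul_apply, ihp, smul_zero]
    have hall : (fun b => D (iotaB A B b) (iotaA A B x)) = fun _ => (0 : ℂ) :=
      @Continuous.ext_on ℂ B _ (wstar ρB) _ _ hdB _ _ hf
        (@continuous_const B ℂ (wstar ρB) _ _) h0
    intro b
    exact congrFun hall b
  -- use weak Connes amenability of the factors
  obtain ⟨ΦA, hΦA⟩ := hWA DA hDAder hDAcont
  obtain ⟨ΦB, hΦB⟩ := hWB DB hDBder hDBcont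
  -- assemble Φ on σwc(A ⊕¹ B)
  let πA : ↥(sigmaWC ρP SP.toBimodule) →L[ℂ] ↥(sigmaWC ρA SA.toBimodule) :=
    ContinuousLinearMap.codRestrict
      (fstC.comp (sigmaWC ρP SP.toBimodule).subtypeL) _ fun z => hmemA _ z.2
  let πB : ↥(sigmaWC ρP SP.toBimodule) →L[ℂ] ↥(sigmaWC ρB SB.toBimodule) :=
    ContinuousLinearMap.codRestrict
      (sndC.comp (sigmaWC ρP SP.toBimodule).subtypeL) _ fun z => hmemB _ z.2
  refine ⟨ΦA.comp πA + ΦB.comp πB, fun u => ?_⟩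
  ext z
  have hxmem : (prodL1 A B (z : WithLp 1 (A × B))).1 ∈ sigmaWC ρA SA.toBimodule :=
    hmemA _ z.2
  have hymem : (prodL1 A B (z : WithLp 1 (A × B))).2 ∈ sigmaWC ρB SB.toBimodule :=
    hmemB _ z.2
  have hL : D u (z : WithLp 1 (A × B)) =
      D (iotaA A B (prodL1 A B u).1) (iotaA A B (prodL1 A B (z : WithLp 1 (A × B))).1) +
      D (iotaB A B (prodL1 A B u).2) (iotaB A B (prodL1 A B (z : WithLp 1 (A × B))).2) := by
    conv_lhs => rw [← hsum u, ← hsum (z : WithLp 1 (A × B))]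
    simp only [map_add, ContinuousLinearMap.add_apply, hcross1 _ hymem,
      hcross2 _ hxmem, add_zero, zero_add]
  have e1 : D (iotaA A B (prodL1 A B u).1) (iotaA A B (prodL1 A B (z : WithLp 1 (A × B))).1) =
      ΦA ⟨SA.mul (prodL1 A B (z : WithLp 1 (A × B))).1 (prodL1 A B u).1,
        smulR_mem_sigmaWC hA hxmem _⟩ -
      ΦA ⟨SA.mul (prodL1 A B u).1 (prodL1 A B (z : WithLp 1 (A × B))).1,
        smulL_mem_sigmaWC hA hxmem _⟩ :=
    congrArg (fun Λ => Λ ⟨(prodL1 A B (z : WithLp 1 (A × B))).1, hxmem⟩)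
      (hΦA (prodL1 A B u).1)
  have e2 : D (iotaB A B (prodL1 A B u).2) (iotaB A B (prodL1 A B (z : WithLp 1 (A × B))).2) =
      ΦB ⟨SB.mul (prodL1 A B (z : WithLp 1 (A × B))).2 (prodL1 A B u).2,
        smulR_mem_sigmaWC hB hymem _⟩ -
      ΦB ⟨SB.mul (prodL1 A B u).2 (prodL1 A B (z : WithLp 1 (A × B))).2,
        smulL_mem_sigmaWC hB hymem _⟩ :=
    congrArg (fun Λ => Λ ⟨(prodL1 A B (z : WithLp 1 (A × B))).2, hymem⟩)
      (hΦB (prodL1 A B u).2)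
  have hR : (dualL hP u (ΦA.comp πA + ΦB.comp πB) -
      dualR hP u (ΦA.comp πA + ΦB.comp πB)) z =
      (ΦA ⟨(prodL1 A B (SP.mul (z : WithLp 1 (A × B)) u)).1,
          hmemA _ (smulR_mem_sigmaWC hP z.2 u)⟩ +
       ΦB ⟨(prodL1 A B (SP.mul (z : WithLp 1 (A × B)) u)).2,
          hmemB _ (smulR_mem_sigmaWC hP z.2 u)⟩) -
      (ΦA ⟨(prodL1 A B (SP.mul u (z : WithLp 1 (A × B)))).1,
          hmemA _ (smulL_mem_sigmaWC hP z.2 u)⟩ +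
       ΦB ⟨(prodL1 A B (SP.mul u (z : WithLp 1 (A × B)))).2,
          hmemB _ (smulL_mem_sigmaWC hP z.2 u)⟩) := rfl
  have k1 : (prodL1 A B (SP.mul (z : WithLp 1 (A × B)) u)).1 =
      SA.mul (prodL1 A B (z : WithLp 1 (A × B))).1 (prodL1 A B u).1 := by rw [hSP]
  have k2 : (prodL1 A B (SP.mul (z : WithLp 1 (A × B)) u)).2 =
      SB.mul (prodL1 A B (z : WithLp 1 (A × B))).2 (prodL1 A B u).2 := by rw [hSP]
  have k3 : (prodL1 A B (SP.mul u (z : WithLp 1 (A × B)))).1 =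
      SA.mul (prodL1 A B u).1 (prodL1 A B (z : WithLp 1 (A × B))).1 := by rw [hSP]
  have k4 : (prodL1 A B (SP.mul u (z : WithLp 1 (A × B)))).2 =
      SB.mul (prodL1 A B u).2 (prodL1 A B (z : WithLp 1 (A × B))).2 := by rw [hSP]
  have g1 : ΦA ⟨(prodL1 A B (SP.mul (z : WithLp 1 (A × B)) u)).1,
        hmemA _ (smulR_mem_sigmaWC hP z.2 u)⟩ =
      ΦA ⟨SA.mul (prodL1 A B (z : WithLp 1 (A × B))).1 (prodL1 A B u).1,
        smulR_mem_sigmaWC hA hxmem _⟩ :=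
    congrArg ΦA (Subtype.ext k1)
  have g2 : ΦB ⟨(prodL1 A B (SP.mul (z : WithLp 1 (A × B)) u)).2,
        hmemB _ (smulR_mem_sigmaWC hP z.2 u)⟩ =
      ΦB ⟨SB.mul (prodL1 A B (z : WithLp 1 (A × B))).2 (prodL1 A B u).2,
        smulR_mem_sigmaWC hB hymem _⟩ :=
    congrArg ΦB (Subtype.ext k2)
  have g3 : ΦA ⟨(prodL1 A B (SP.mul u (z : WithLp 1 (A × B)))).1,
        hmemA _ (smulL_mem_sigmaWC hP z.2 u)⟩ =
      ΦA ⟨SA.mul (prodL1 A B u).1 (prodL1 A B (z : WithLp 1 (A × B))).1,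
        smulL_mem_sigmaWC hA hxmem _⟩ :=
    congrArg ΦA (Subtype.ext k3)
  have g4 : ΦB ⟨(prodL1 A B (SP.mul u (z : WithLp 1 (A × B)))).2,
        hmemB _ (smulL_mem_sigmaWC hP z.2 u)⟩ =
      ΦB ⟨SB.mul (prodL1 A B u).2 (prodL1 A B (z : WithLp 1 (A × B))).2,
        smulL_mem_sigmaWC hB hymem _⟩ :=
    congrArg ΦB (Subtype.ext k4)
  show D u (z : WithLp 1 (A × B)) = _
  rw [hR, g1, g2, g3, g4, hL, e1, e2]
  ring
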